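/- Let μ : [R₀,∞) → (0,∞) be a non-decreasing differentiable function, and suppose there are constants a > 0 and b_0 ≥ 0 such that a − b_0·μ(R)^(−1/p) ≤ (d/dR) log μ(R) for all R ≥ R₀ and some p ≥ 1. If sup_{R} μ(R) = L < ∞, then L^(1/p) ≤ b_0/a. -/

import Mathlib

/-- volume gap: if `μ` is positive non-decreasing differentiable on `[R₀,∞)` with
`a − b₀·μ(R)^(−1/p) ≤ (log μ)'(R)` for all `R ≥ R₀`, and `L = sup μ < ∞`, then
`L^(1/p) ≤ b₀/a`. -/
theorem stmt_7 (R₀ a b₀ p L : ℝ) (ha : 0 < a) (hb : 0 ≤ b₀) (hp : 1 ≤ p)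
    (μ : ℝ → ℝ) (hμpos : ∀ R ∈ Set.Ici R₀, 0 < μ R)
    (hμmono : MonotoneOn μ (Set.Ici R₀))
    (hμdiff : ∀ R ∈ Set.Ici R₀, DifferentiableAt ℝ μ R)
    (hODE : ∀ R ∈ Set.Ici R₀,
      a - b₀ * μ R ^ (-(1:ℝ)/p) ≤ deriv (fun s => Real.log (μ s)) R)
    (hL : IsLUB (μ '' Set.Ici R₀) L) :
    L ^ (1/p) ≤ b₀ / a := by
  by_contra hcon
  push_neg at hcon
  have hp0 : (0:ℝ) < p := lt_of_lt_of_le one_pos hp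
  have hR₀ : R₀ ∈ Set.Ici R₀ := Set.self_mem_Ici
  have hLub : ∀ R ∈ Set.Ici R₀, μ R ≤ L := fun R hR => hL.1 ⟨R, hR, rfl⟩
  have hL0 : 0 < L := lt_of_lt_of_le (hμpos R₀ hR₀) (hLub R₀ hR₀)
  have hba : 0 ≤ b₀ / a := div_nonneg hb ha.le
  -- (b₀/a)^p < L
  have hkey : (b₀ / a) ^ p < L := by
    have h1 : (b₀/a) ^ p < (L ^ (1/p)) ^ p := Real.rpow_lt_rpow hba hcon hp0
    rwa [← Real.rpow_mul hL0.le, one_div, inv_mul_cancel₀ hp0.ne',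
      Real.rpow_one] at h1
  -- pick R₁ with μ R₁ > (b₀/a)^p
  obtain ⟨x, hx, hx1, -⟩ := hL.exists_between hkey
  obtain ⟨R₁, hR₁, rfl⟩ := hx
  set c : ℝ := a - b₀ * μ R₁ ^ (-(1:ℝ)/p) with hc
  have hμR₁ : 0 < μ R₁ := hμpos R₁ hR₁
  have hc0 : 0 < c := by
    have h2 : b₀ / a < μ R₁ ^ (1/p) := by
      calc b₀ / a = ((b₀/a) ^ p) ^ (1/p) := by
            rw [← Real.rpow_mul hba, mul_one_div, div_self hp0.ne', Real.rpow_one]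
        _ < (μ R₁) ^ (1/p) := Real.rpow_lt_rpow (Real.rpow_nonneg hba p) hx1
            (by positivity)
    have hpow : 0 < μ R₁ ^ (1/p) := Real.rpow_pos_of_pos hμR₁ _
    have h3 : b₀ < a * μ R₁ ^ (1/p) := by
      rw [div_lt_iff₀ ha] at h2; linarith [h2]
    have h4 : μ R₁ ^ (-(1:ℝ)/p) = (μ R₁ ^ (1/p))⁻¹ := by
      rw [neg_div, Real.rpow_neg hμR₁.le]
    rw [hc, h4, sub_pos, mul_inv_lt_iff₀ hpow]
    linarith
  -- uniform derivative bound for R ≥ R₁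
  have hderiv : ∀ R ∈ Set.Ici R₁, c ≤ deriv (fun s => Real.log (μ s)) R := by
    intro R hR
    have hR' : R ∈ Set.Ici R₀ := Set.mem_Ici.2 (le_trans hR₁ hR)
    have hmono : μ R₁ ≤ μ R := hμmono hR₁ hR' hR
    have hle : μ R ^ (-(1:ℝ)/p) ≤ μ R₁ ^ (-(1:ℝ)/p) := by
      rw [neg_div, Real.rpow_neg hμR₁.le, Real.rpow_neg (hμpos R hR').le]
      exact inv_anti₀ (Real.rpow_pos_of_pos hμR₁ _)
        (Real.rpow_le_rpow hμR₁.le hmono (by positivity))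
    calc c ≤ a - b₀ * μ R ^ (-(1:ℝ)/p) := by
          rw [hc]; nlinarith [mul_le_mul_of_nonneg_left hle hb]
      _ ≤ _ := hODE R hR'
  -- g := log μ - c * id is monotone on [R₁, ∞)
  set g : ℝ → ℝ := fun s => Real.log (μ s) - c * s with hg
  have hdiffg : ∀ R ∈ Set.Ici R₁, DifferentiableAt ℝ g R := by
    intro R hR
    have hR' : R ∈ Set.Ici R₀ := Set.mem_Ici.2 (le_trans hR₁ hR)
    exact (((hμdiff R hR').log (hμpos R hR').ne').sub
      (differentiableAt_id.const_mul c))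
  have hgmono : MonotoneOn g (Set.Ici R₁) := by
    apply monotoneOn_of_deriv_nonneg (convex_Ici R₁)
    · exact fun R hR => ((hdiffg R hR).continuousAt).continuousWithinAt
    · intro R hR
      rw [interior_Ici] at hR
      exact (hdiffg R (Set.mem_Ici.2 (le_of_lt hR))).differentiableWithinAt
    · intro R hR
      rw [interior_Ici] at hR
      have hR' : R ∈ Set.Ici R₀ := Set.mem_Ici.2 (le_trans hR₁ hR.le)
      have h1 : HasDerivAt (fun s => Real.log (μ s))
          (deriv (fun s => Real.log (μ s)) R) R :=
        (((hμdiff R hR').log (hμpos R hR').ne')).hasDerivAt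
      have h2 : HasDerivAt (fun s : ℝ => c * s) c R := by
        simpa using (hasDerivAt_id R).const_mul c
      have : deriv g R = deriv (fun s => Real.log (μ s)) R - c := by
        rw [hg]; exact (h1.sub h2).deriv
      rw [this, sub_nonneg]
      exact hderiv R (Set.mem_Ici.2 hR.le)
  -- derive contradiction at large R
  set M : ℝ := Real.log L - Real.log (μ R₁) with hM
  have hM0 : 0 ≤ M := sub_nonneg.2 (Real.log_le_log hμR₁ (hLub R₁ hR₁))
  set R : ℝ := R₁ + (M + 1) / c with hR
  have hRge : R₁ ≤ R := by
    have h0 : 0 ≤ (M + 1) / c := div_nonneg (by linarith) hc0.le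
    rw [hR]; linarith
  have h5 : g R₁ ≤ g R := hgmono Set.self_mem_Ici hRge hRge
  have h6 : Real.log (μ R) ≤ Real.log L :=
    Real.log_le_log (hμpos R (le_trans hR₁ hRge)) (hLub R (le_trans hR₁ hRge))
  have h7 : c * R - c * R₁ = M + 1 := by
    rw [hR]; field_simp; ring
  have : Real.log (μ R₁) + (M + 1) ≤ Real.log (μ R) := by
    have := h5
    simp only [hg] at this
    linarith [this, h7]
  rw [hM] at this
  linarith
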